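/- There exist probability vectors p, q ∈ Prob(8), namely p = (16,4,4,4,4,4,0,0)/36 and q = (8,8,8,8,1,1,1,1)/36, such that H_α(p) < H_α(q) for every α ∈ [0,∞], yet neither p ≻ q nor q ≻ p. Hence Rényi entropies form an incomplete family of majorization monotones. -/

import Mathlib

/-- The sum of the `k` largest entries of `r`. -/
noncomputable def topSum {n : ℕ} (r : Fin n → ℝ) (k : ℕ) : ℝ :=
  sSup {x : ℝ | ∃ s : Finset (Fin n), s.card = k ∧ x = ∑ i ∈ s, r i}

lemma topSum_le {n : ℕ} (r : Fin n → ℝ) (k : ℕ) (hk : k ≤ n) (c : ℝ)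
    (h : ∀ s : Finset (Fin n), s.card = k → ∑ i ∈ s, r i ≤ c) : topSum r k ≤ c := by
  apply csSup_le
  · obtain ⟨s, _, hs⟩ := Finset.exists_subset_card_eq (s := (Finset.univ : Finset (Fin n)))
      (n := k) (by simpa using hk)
    exact ⟨_, s, hs, rfl⟩
  · rintro x ⟨s, hs, rfl⟩; exact h s hs

lemma le_topSum {n : ℕ} (r : Fin n → ℝ) (k : ℕ) (s : Finset (Fin n)) (hs : s.card = k) :
    ∑ i ∈ s, r i ≤ topSum r k := by
  apply le_csSup
  · have : {x : ℝ | ∃ s : Finset (Fin n), s.card = k ∧ x = ∑ i ∈ s, r i}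
        = (fun s : Finset (Fin n) => ∑ i ∈ s, r i) '' {s | s.card = k} := by
      ext x
      constructor
      · rintro ⟨s, hs, rfl⟩; exact ⟨s, hs, rfl⟩
      · rintro ⟨s, hs, rfl⟩; exact ⟨s, hs, rfl⟩
    rw [this]
    exact (Set.toFinite _).image _ |>.bddAbove
  · exact ⟨s, hs, rfl⟩

/-- Majorization. -/
def MajP {n : ℕ} (p q : Fin n → ℝ) : Prop :=
  (∀ k : ℕ, k ≤ n → topSum q k ≤ topSum p k) ∧ topSum p n = topSum q n

/-- A probability vector in `ℝⁿ`. -/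
def ProbVec {n : ℕ} (p : Fin n → ℝ) : Prop :=
  (∀ i, 0 ≤ p i) ∧ ∑ i, p i = 1

/-- The α-Rényi entropy (logarithm base 2), for `α ≠ 0, 1, ∞`. -/
noncomputable def renyiEntropy {n : ℕ} (α : ℝ) (p : Fin n → ℝ) : ℝ :=
  (1 / (1 - α)) * Real.logb 2 (∑ x, p x ^ α)

/-- The max- (Hartley) entropy `H₀`. -/
noncomputable def hartleyEntropy {n : ℕ} (p : Fin n → ℝ) : ℝ :=
  Real.logb 2 ((Finset.univ.filter fun x => p x ≠ 0).card)

/-- The Shannon entropy `H₁` (with the convention `0 log 0 = 0`). -/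
noncomputable def shannonEntropy {n : ℕ} (p : Fin n → ℝ) : ℝ :=
  ∑ x, -(p x * Real.logb 2 (p x))

/-- The min-entropy `H_∞`. -/
noncomputable def minEntropy {n : ℕ} (p : Fin n → ℝ) : ℝ :=
  -Real.logb 2 (sSup (Set.range p))

/-- Rényi entropies are an incomplete family of majorization monotones:
`p = (16,4,4,4,4,4,0,0)/36` and `q = (8,8,8,8,1,1,1,1)/36` satisfy
`H_α(p) < H_α(q)` for all `α ∈ [0,∞]`, yet neither majorizes the other. -/
theorem renyi_incomplete :
    ∃ p q : Fin 8 → ℝ,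
      p = ![16 / 36, 4 / 36, 4 / 36, 4 / 36, 4 / 36, 4 / 36, 0, 0] ∧
      q = ![8 / 36, 8 / 36, 8 / 36, 8 / 36, 1 / 36, 1 / 36, 1 / 36, 1 / 36] ∧
      ProbVec p ∧ ProbVec q ∧
      (∀ α : ℝ, 0 < α → α ≠ 1 → renyiEntropy α p < renyiEntropy α q) ∧
      hartleyEntropy p < hartleyEntropy q ∧
      shannonEntropy p < shannonEntropy q ∧
      minEntropy p < minEntropy q ∧
      ¬MajP p q ∧ ¬MajP q p := by
  set p : Fin 8 → ℝ := ![16 / 36, 4 / 36, 4 / 36, 4 / 36, 4 / 36, 4 / 36, 0, 0] with hp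
  set q : Fin 8 → ℝ := ![8 / 36, 8 / 36, 8 / 36, 8 / 36, 1 / 36, 1 / 36, 1 / 36, 1 / 36] with hq
  refine ⟨p, q, rfl, rfl, ?_, ?_, ?_, ?_, ?_, ?_, ?_, ?_⟩
  · -- ProbVec p
    constructor
    · intro i; fin_cases i <;> norm_num [hp]
    · norm_num [hp, Fin.sum_univ_succ]
  · -- ProbVec q
    constructor
    · intro i; fin_cases i <;> norm_num [hq]
    · norm_num [hq, Fin.sum_univ_succ]
  · -- Rényi
    intro α hα hα1
    set t : ℝ := (2:ℝ) ^ α with htdef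
    have ht0 : (0:ℝ) < t := Real.rpow_pos_of_pos (by norm_num) _
    have hu0 : (0:ℝ) < (36:ℝ) ^ α := Real.rpow_pos_of_pos (by norm_num) _
    have key : ∀ (c : ℝ) (k : ℕ), 0 < c → c = 2 ^ k → (c / 36 : ℝ) ^ α = t ^ k / 36 ^ α := by
      intro c k hc hck
      rw [Real.div_rpow hc.le (by norm_num), hck]
      congr 1
      rw [← Real.rpow_natCast 2 k, ← Real.rpow_natCast t k, htdef,
        ← Real.rpow_mul (by norm_num), ← Real.rpow_mul (by norm_num), mul_comm]
    have h16 : ((16:ℝ) / 36) ^ α = t ^ 4 / 36 ^ α := key 16 4 (by norm_num) (by norm_num)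
    have h8 : ((8:ℝ) / 36) ^ α = t ^ 3 / 36 ^ α := key 8 3 (by norm_num) (by norm_num)
    have h4 : ((4:ℝ) / 36) ^ α = t ^ 2 / 36 ^ α := key 4 2 (by norm_num) (by norm_num)
    have h1 : ((1:ℝ) / 36) ^ α = 1 / 36 ^ α := by
      have := key 1 0 (by norm_num) (by norm_num)
      simpa using this
    have hSp : ∑ x, p x ^ α = (t ^ 4 + 5 * t ^ 2) / 36 ^ α := by
      simp only [hp, Fin.sum_univ_succ, Finset.sum_empty, Matrix.cons_val_zero,
        Matrix.cons_val_succ, Finset.univ_eq_empty]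
      rw [h16, h4, Real.zero_rpow (ne_of_gt hα)]
      ring
    have hSq : ∑ x, q x ^ α = (4 * t ^ 3 + 4) / 36 ^ α := by
      simp only [hq, Fin.sum_univ_succ, Finset.sum_empty, Matrix.cons_val_zero,
        Matrix.cons_val_succ, Finset.univ_eq_empty]
      rw [h8, h1]
      ring
    have hg : 0 < t ^ 3 - 2 * t ^ 2 + t + 2 := by
      nlinarith [mul_nonneg ht0.le (sq_nonneg (t - 1))]
    have hSp0 : 0 < ∑ x, p x ^ α := by rw [hSp]; positivity
    have hSq0 : 0 < ∑ x, q x ^ α := by rw [hSq]; positivity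
    unfold renyiEntropy
    rcases lt_or_gt_of_ne hα1 with h | h
    · have ht2 : t < 2 := by
        have h2 : (2:ℝ) ^ α < 2 ^ (1:ℝ) := (Real.rpow_lt_rpow_left_iff one_lt_two).mpr h
        simpa using h2
      have hlt : ∑ x, p x ^ α < ∑ x, q x ^ α := by
        rw [hSp, hSq, div_lt_div_iff₀ hu0 hu0]
        nlinarith [mul_pos (mul_pos (sub_pos.mpr ht2) hg) hu0]
      have hlog := Real.logb_lt_logb one_lt_two hSp0 hlt
      have hc : 0 < 1 / (1 - α) := by
        apply div_pos one_pos; linarith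
      exact mul_lt_mul_of_pos_left hlog hc
    · have ht2 : 2 < t := by
        have h2 : (2:ℝ) ^ (1:ℝ) < 2 ^ α := (Real.rpow_lt_rpow_left_iff one_lt_two).mpr h
        simpa using h2
      have hlt : ∑ x, q x ^ α < ∑ x, p x ^ α := by
        rw [hSp, hSq, div_lt_div_iff₀ hu0 hu0]
        nlinarith [mul_pos (mul_pos (sub_pos.mpr ht2) hg) hu0]
      have hlog := Real.logb_lt_logb one_lt_two hSq0 hlt
      have hc : 1 / (1 - α) < 0 := by
        apply div_neg_of_pos_of_neg one_pos; linarith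
      exact mul_lt_mul_of_neg_left hlog hc
  · -- Hartley
    have hfp : (Finset.univ.filter fun x => p x ≠ 0) = ({0, 1, 2, 3, 4, 5} : Finset (Fin 8)) := by
      ext i
      fin_cases i <;> norm_num [hp] <;> decide
    have hfq : (Finset.univ.filter fun x => q x ≠ 0) = (Finset.univ : Finset (Fin 8)) := by
      ext i
      fin_cases i <;> norm_num [hq] <;> decide
    unfold hartleyEntropy
    rw [hfp, hfq, show ({0, 1, 2, 3, 4, 5} : Finset (Fin 8)).card = 6 from rfl,
      show (Finset.univ : Finset (Fin 8)).card = 8 from rfl]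
    exact Real.logb_lt_logb one_lt_two (by norm_num) (by norm_num)
  · -- Shannon
    have lb2 : Real.logb 2 2 = 1 := Real.logb_self_eq_one one_lt_two
    have l16 : Real.logb 2 (16 / 36) = 4 - Real.logb 2 36 := by
      rw [Real.logb_div (by norm_num) (by norm_num),
        show (16:ℝ) = 2 ^ (4:ℕ) by norm_num, Real.logb_pow, lb2]
      norm_num
    have l8 : Real.logb 2 (8 / 36) = 3 - Real.logb 2 36 := by
      rw [Real.logb_div (by norm_num) (by norm_num),
        show (8:ℝ) = 2 ^ (3:ℕ) by norm_num, Real.logb_pow, lb2]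
      norm_num
    have l4 : Real.logb 2 (4 / 36) = 2 - Real.logb 2 36 := by
      rw [Real.logb_div (by norm_num) (by norm_num),
        show (4:ℝ) = 2 ^ (2:ℕ) by norm_num, Real.logb_pow, lb2]
      norm_num
    have l1 : Real.logb 2 (1 / 36) = 0 - Real.logb 2 36 := by
      rw [Real.logb_div (by norm_num) (by norm_num), Real.logb_one]
    have hsp : shannonEntropy p = Real.logb 2 36 - 104 / 36 := by
      simp only [shannonEntropy, hp, Fin.sum_univ_succ, Finset.sum_empty, Matrix.cons_val_zero,
        Matrix.cons_val_succ, Finset.univ_eq_empty]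
      rw [l16, l4]
      ring
    have hsq : shannonEntropy q = Real.logb 2 36 - 96 / 36 := by
      simp only [shannonEntropy, hq, Fin.sum_univ_succ, Finset.sum_empty, Matrix.cons_val_zero,
        Matrix.cons_val_succ, Finset.univ_eq_empty]
      rw [l8, l1]
      ring
    rw [hsp, hsq]
    norm_num
  · -- Min-entropy
    have hsp : sSup (Set.range p) = 16 / 36 := by
      apply le_antisymm
      · apply csSup_le (Set.range_nonempty p)
        rintro x ⟨i, rfl⟩
        fin_cases i <;> norm_num [hp]
      · exact le_csSup (Set.finite_range p).bddAbove ⟨0, by norm_num [hp]⟩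
    have hsq : sSup (Set.range q) = 8 / 36 := by
      apply le_antisymm
      · apply csSup_le (Set.range_nonempty q)
        rintro x ⟨i, rfl⟩
        fin_cases i <;> norm_num [hq]
      · exact le_csSup (Set.finite_range q).bddAbove ⟨0, by norm_num [hq]⟩
    unfold minEntropy
    rw [hsp, hsq]
    have := Real.logb_lt_logb (x := 8 / 36) (y := 16 / 36) one_lt_two (by norm_num) (by norm_num)
    linarith
  · -- ¬MajP p q
    rintro ⟨h1, -⟩
    have h4 := h1 4 (by norm_num)
    have hub : topSum p 4 ≤ 28 / 36 := by
      apply topSum_le _ _ (by norm_num)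
      intro s hs
      have hle : ∀ i ∈ s, p i ≤ 4 / 36 + (if i = 0 then (12 / 36 : ℝ) else 0) := by
        intro i _; fin_cases i <;> norm_num [hp, Fin.ext_iff]
      calc ∑ i ∈ s, p i ≤ ∑ i ∈ s, (4 / 36 + (if i = 0 then (12 / 36 : ℝ) else 0)) :=
            Finset.sum_le_sum hle
        _ = s.card • (4 / 36 : ℝ) + ∑ i ∈ s, (if i = 0 then (12 / 36 : ℝ) else 0) := by
            rw [Finset.sum_add_distrib, Finset.sum_const]
        _ ≤ 4 * (4 / 36) + 12 / 36 := by
            rw [hs, Finset.sum_ite_eq' s 0 (fun _ => (12 / 36 : ℝ))]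
            split_ifs <;> norm_num
        _ = 28 / 36 := by norm_num
    have hlb : (32 / 36 : ℝ) ≤ topSum q 4 := by
      have h := le_topSum q 4 ({0, 1, 2, 3} : Finset (Fin 8)) (by decide)
      have e : ∑ i ∈ ({0, 1, 2, 3} : Finset (Fin 8)), q i = 32 / 36 := by
        rw [show ({0, 1, 2, 3} : Finset (Fin 8)) = {0} ∪ {1} ∪ {2} ∪ {3} by decide]
        rw [Finset.sum_union (by decide), Finset.sum_union (by decide),
          Finset.sum_union (by decide)]
        norm_num [hq, Matrix.cons_val_two, Matrix.cons_val_three, Matrix.vecHead, Matrix.vecTail]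
      linarith
    linarith
  · -- ¬MajP q p
    rintro ⟨h1, -⟩
    have h4 := h1 1 (by norm_num)
    have hub : topSum q 1 ≤ 8 / 36 := by
      apply topSum_le _ _ (by norm_num)
      intro s hs
      obtain ⟨i, rfl⟩ := Finset.card_eq_one.mp hs
      rw [Finset.sum_singleton]
      fin_cases i <;> norm_num [hq]
    have hlb : (16 / 36 : ℝ) ≤ topSum p 1 := by
      have h := le_topSum p 1 ({0} : Finset (Fin 8)) (by decide)
      have e : ∑ i ∈ ({0} : Finset (Fin 8)), p i = 16 / 36 := by simp [hp]
      linarith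
    linarith
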